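/- Let G : C ⥤ D be a braided strong monoidal functor between braided monoidal categories, part of an ambiadjunction F ⊣ G ⊣ F with induced lax and oplax structures on F. If the right projection formula morphisms rproj^{F,G⊣F} and rproj^{F,F⊣G} are mutual inverses, then the left projection formula morphisms lproj^{F,G⊣F}_{A,X} : A ⊗ F(X) ⟶ F(G(A) ⊗ X) and lproj^{F,F⊣G}_{A,X} : F(G(A) ⊗ X) ⟶ A ⊗ F(X) are also mutual inverses. (The key identity is F(β^D_{X,GA}) ∘ rproj_{X,A} = lproj_{A,X} ∘ β^C_{FX,A}, valid for both adjunctions.) -/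

import Mathlib

open CategoryTheory MonoidalCategory

universe v₁ v₂ v₃ u₁ u₂ u₃

/-- The data of a functor equipped with both a lax and an oplax monoidal structure. -/
structure FrobData (D : Type u₁) [Category.{v₁} D] [MonoidalCategory D]
    (C : Type u₂) [Category.{v₂} C] [MonoidalCategory C] where
  F : D ⥤ C
  lax : ∀ X Y : D, F.obj X ⊗ F.obj Y ⟶ F.obj (X ⊗ Y)
  lax₀ : 𝟙_ C ⟶ F.obj (𝟙_ D)
  oplax : ∀ X Y : D, F.obj (X ⊗ Y) ⟶ F.obj X ⊗ F.obj Y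
  oplax₀ : F.obj (𝟙_ D) ⟶ 𝟙_ C

variable {D : Type u₁} [Category.{v₁} D] [MonoidalCategory D]
variable {C : Type u₂} [Category.{v₂} C] [MonoidalCategory C]

/-- The axioms of a lax monoidal structure. -/
def FrobData.IsLax (d : FrobData D C) : Prop :=
  (∀ {X Y X' Y' : D} (f : X ⟶ X') (g : Y ⟶ Y'),
    (d.F.map f ⊗ₘ d.F.map g) ≫ d.lax X' Y' = d.lax X Y ≫ d.F.map (f ⊗ₘ g)) ∧
  (∀ X Y Z : D,
    (d.lax X Y ▷ d.F.obj Z) ≫ d.lax (X ⊗ Y) Z ≫ d.F.map (α_ X Y Z).hom =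
      (α_ (d.F.obj X) (d.F.obj Y) (d.F.obj Z)).hom ≫ (d.F.obj X ◁ d.lax Y Z) ≫
        d.lax X (Y ⊗ Z)) ∧
  (∀ X : D,
    (d.lax₀ ▷ d.F.obj X) ≫ d.lax (𝟙_ D) X ≫ d.F.map (λ_ X).hom = (λ_ (d.F.obj X)).hom) ∧
  (∀ X : D,
    (d.F.obj X ◁ d.lax₀) ≫ d.lax X (𝟙_ D) ≫ d.F.map (ρ_ X).hom = (ρ_ (d.F.obj X)).hom)

/-- The axioms of an oplax monoidal structure. -/
def FrobData.IsOplax (d : FrobData D C) : Prop :=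
  (∀ {X Y X' Y' : D} (f : X ⟶ X') (g : Y ⟶ Y'),
    d.F.map (f ⊗ₘ g) ≫ d.oplax X' Y' = d.oplax X Y ≫ (d.F.map f ⊗ₘ d.F.map g)) ∧
  (∀ X Y Z : D,
    d.oplax (X ⊗ Y) Z ≫ (d.oplax X Y ▷ d.F.obj Z) ≫
        (α_ (d.F.obj X) (d.F.obj Y) (d.F.obj Z)).hom =
      d.F.map (α_ X Y Z).hom ≫ d.oplax X (Y ⊗ Z) ≫ (d.F.obj X ◁ d.oplax Y Z)) ∧
  (∀ X : D,
    d.oplax (𝟙_ D) X ≫ (d.oplax₀ ▷ d.F.obj X) ≫ (λ_ (d.F.obj X)).hom = d.F.map (λ_ X).hom) ∧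
  (∀ X : D,
    d.oplax X (𝟙_ D) ≫ (d.F.obj X ◁ d.oplax₀) ≫ (ρ_ (d.F.obj X)).hom = d.F.map (ρ_ X).hom)

/-- The two Frobenius compatibility conditions. -/
def FrobData.IsFrobenius (d : FrobData D C) : Prop :=
  (∀ X Y Z : D,
    (d.F.obj X ◁ d.oplax Y Z) ≫ (α_ (d.F.obj X) (d.F.obj Y) (d.F.obj Z)).inv ≫
        (d.lax X Y ▷ d.F.obj Z) =
      d.lax X (Y ⊗ Z) ≫ d.F.map (α_ X Y Z).inv ≫ d.oplax (X ⊗ Y) Z) ∧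
  (∀ X Y Z : D,
    (d.oplax X Y ▷ d.F.obj Z) ≫ (α_ (d.F.obj X) (d.F.obj Y) (d.F.obj Z)).hom ≫
        (d.F.obj X ◁ d.lax Y Z) =
      d.lax (X ⊗ Y) Z ≫ d.F.map (α_ X Y Z).hom ≫ d.oplax X (Y ⊗ Z))

open Functor.LaxMonoidal Functor.OplaxMonoidal

/-- The functor `F` with the lax structure induced from `G ⊣ F` and the oplax structure
induced from `F ⊣ G`, for a strong monoidal `G`. -/
def inducedFrobData (G : C ⥤ D) [G.Monoidal] (F : D ⥤ C)
    (adj₁ : F ⊣ G) (adj₂ : G ⊣ F) : FrobData D C where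
  F := F
  lax X Y := adj₂.unit.app (F.obj X ⊗ F.obj Y) ≫
    F.map (δ G (F.obj X) (F.obj Y) ≫ (adj₂.counit.app X ⊗ₘ adj₂.counit.app Y))
  lax₀ := adj₂.unit.app (𝟙_ C) ≫ F.map (η G)
  oplax X Y := F.map ((adj₁.unit.app X ⊗ₘ adj₁.unit.app Y) ≫ μ G (F.obj X) (F.obj Y)) ≫
    adj₁.counit.app (F.obj X ⊗ F.obj Y)
  oplax₀ := F.map (ε G) ≫ adj₁.counit.app (𝟙_ C)

/-- The right projection formula morphism for the monoidal adjunction `G ⊣ F`. -/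
def rprojR (G : C ⥤ D) [G.Monoidal] (F : D ⥤ C) (adj₁ : F ⊣ G) (adj₂ : G ⊣ F)
    (X : D) (A : C) : F.obj X ⊗ A ⟶ F.obj (X ⊗ G.obj A) :=
  (F.obj X ◁ adj₂.unit.app A) ≫ (inducedFrobData G F adj₁ adj₂).lax X (G.obj A)

/-- The right projection formula morphism for the opmonoidal adjunction `F ⊣ G`. -/
def rprojL (G : C ⥤ D) [G.Monoidal] (F : D ⥤ C) (adj₁ : F ⊣ G) (adj₂ : G ⊣ F)
    (X : D) (A : C) : F.obj (X ⊗ G.obj A) ⟶ F.obj X ⊗ A :=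
  (inducedFrobData G F adj₁ adj₂).oplax X (G.obj A) ≫ (F.obj X ◁ adj₁.counit.app A)

/-- The left projection formula morphism for the monoidal adjunction `G ⊣ F`. -/
def lprojR (G : C ⥤ D) [G.Monoidal] (F : D ⥤ C) (adj₁ : F ⊣ G) (adj₂ : G ⊣ F)
    (A : C) (X : D) : A ⊗ F.obj X ⟶ F.obj (G.obj A ⊗ X) :=
  (adj₂.unit.app A ▷ F.obj X) ≫ (inducedFrobData G F adj₁ adj₂).lax (G.obj A) X

/-- The left projection formula morphism for the opmonoidal adjunction `F ⊣ G`. -/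
def lprojL (G : C ⥤ D) [G.Monoidal] (F : D ⥤ C) (adj₁ : F ⊣ G) (adj₂ : G ⊣ F)
    (A : C) (X : D) : F.obj (G.obj A ⊗ X) ⟶ A ⊗ F.obj X :=
  (inducedFrobData G F adj₁ adj₂).oplax (G.obj A) X ≫ (adj₁.counit.app A ▷ F.obj X)

/-- if `G` is a braided strong monoidal functor between braided monoidal
categories, part of an ambiadjunction `F ⊣ G ⊣ F` with induced lax and oplax structures
on `F`, and the right projection formula morphisms are mutual inverses, then the left
projection formula morphisms are also mutual inverses. -/
theorem left_projection_formulas_mutually_inverse_of_right_in_braided_context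
    [BraidedCategory C] [BraidedCategory D]
    (G : C ⥤ D) [G.Monoidal] (F : D ⥤ C) (adj₁ : F ⊣ G) (adj₂ : G ⊣ F)
    (hbraided : ∀ A B : C,
      μ G A B ≫ G.map (β_ A B).hom = (β_ (G.obj A) (G.obj B)).hom ≫ μ G B A)
    (h₁ : ∀ (X : D) (A : C),
      rprojR G F adj₁ adj₂ X A ≫ rprojL G F adj₁ adj₂ X A = 𝟙 (F.obj X ⊗ A))
    (h₂ : ∀ (X : D) (A : C),
      rprojL G F adj₁ adj₂ X A ≫ rprojR G F adj₁ adj₂ X A = 𝟙 (F.obj (X ⊗ G.obj A))) :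
    (∀ (A : C) (X : D),
      lprojR G F adj₁ adj₂ A X ≫ lprojL G F adj₁ adj₂ A X = 𝟙 (A ⊗ F.obj X)) ∧
    (∀ (A : C) (X : D),
      lprojL G F adj₁ adj₂ A X ≫ lprojR G F adj₁ adj₂ A X = 𝟙 (F.obj (G.obj A ⊗ X))) := by
  -- `δ` is braided
  have hδ : ∀ A B : C, δ G A B ≫ (β_ (G.obj A) (G.obj B)).hom =
      G.map (β_ A B).hom ≫ δ G B A := by
    intro A B
    rw [← cancel_epi (μ G A B)]
    simp [reassoc_of% (hbraided A B)]
  -- the induced lax structure commutes with the braidings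
  have hlax : ∀ X Y : D, (inducedFrobData G F adj₁ adj₂).lax X Y ≫ F.map (β_ X Y).hom =
      (β_ (F.obj X) (F.obj Y)).hom ≫ (inducedFrobData G F adj₁ adj₂).lax Y X := by
    intro X Y
    dsimp [inducedFrobData]
    rw [Category.assoc, ← F.map_comp, Category.assoc,
      BraidedCategory.braiding_naturality, reassoc_of% (hδ (F.obj X) (F.obj Y)),
      F.map_comp, ← Functor.comp_map, ← adj₂.unit.naturality_assoc]
    simp
  -- the induced oplax structure commutes with the braidings
  have hoplax : ∀ X Y : D, F.map (β_ X Y).hom ≫ (inducedFrobData G F adj₁ adj₂).oplax Y X =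
      (inducedFrobData G F adj₁ adj₂).oplax X Y ≫ (β_ (F.obj X) (F.obj Y)).hom := by
    intro X Y
    dsimp [inducedFrobData]
    rw [← Category.assoc, ← F.map_comp, ← BraidedCategory.braiding_naturality_assoc,
      ← hbraided (F.obj X) (F.obj Y), Category.assoc, F.map_comp, F.map_comp,
      Category.assoc, Category.assoc, ← Functor.comp_map,
      adj₁.counit.naturality (β_ (F.obj X) (F.obj Y)).hom]
    simp
  -- key identity relating the right and left projection morphisms, `G ⊣ F` case
  have hR : ∀ (X : D) (A : C),
      rprojR G F adj₁ adj₂ X A ≫ F.map (β_ X (G.obj A)).hom =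
        (β_ (F.obj X) A).hom ≫ lprojR G F adj₁ adj₂ A X := by
    intro X A
    dsimp only [rprojR, lprojR]
    erw [Category.assoc, hlax, ← BraidedCategory.braiding_naturality_right_assoc]
    rfl
  -- key identity relating the right and left projection morphisms, `F ⊣ G` case
  have hL : ∀ (X : D) (A : C),
      F.map (β_ X (G.obj A)).hom ≫ lprojL G F adj₁ adj₂ A X =
        rprojL G F adj₁ adj₂ X A ≫ (β_ (F.obj X) A).hom := by
    intro X A
    dsimp only [rprojL, lprojL]
    erw [← Category.assoc, hoplax, Category.assoc, Category.assoc]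
    simp [BraidedCategory.braiding_naturality_right]
    simp [inducedFrobData, BraidedCategory.braiding_naturality_right]
  constructor
  · intro A X
    rw [← cancel_epi (β_ (F.obj X) A).hom, Category.comp_id, ← Category.assoc, ← hR,
      Category.assoc, hL, reassoc_of% (h₁ X A)]
  · intro A X
    rw [← cancel_epi (F.map (β_ X (G.obj A)).hom), Category.comp_id, ← Category.assoc, hL,
      Category.assoc, ← hR, reassoc_of% (h₂ X A)]
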